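/- For the first encoding with k = 3: given distinct non-adjacent nodes i, j, the clause C_{ij} = {¬x_i, ¬x_j} ∪ {x_r : r is a common neighbor of i and j} ∪ {y_{r_1 r_2} : i–r_1, r_1–r_2, r_2–j are edges, r_1, r_2 ∉ {i,j}, r_1 ≠ r_2}, together with the defining clauses y_{r_1 r_2} ↔ x_{r_1} ∧ x_{r_2}, is satisfied by an assignment t with t(x_i) = t(x_j) = 1 if and only if the set S = {v : t(x_v) = 1} contains an i–j path of length at most 3 in G[S]. -/

import Mathlib

/-- `S` is a `k`-club of `G`: every pair of distinct nodes of `S` is connected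
in the subgraph induced by `S` (i.e. by a walk all of whose vertices lie in `S`)
by a path with at most `k` edges. -/
def IsKClub {V : Type*} (G : SimpleGraph V) (k : ℕ) (S : Set V) : Prop :=
  ∀ i ∈ S, ∀ j ∈ S, i ≠ j →
    ∃ w : G.Walk i j, w.length ≤ k ∧ ∀ v ∈ w.support, v ∈ S

/-- The `k`-club number `ω_k(G)`: the maximum cardinality of a `k`-club of `G`. -/
noncomputable def clubNumber {V : Type*} [Fintype V] (G : SimpleGraph V) (k : ℕ) : ℕ :=
  sSup {n | ∃ S : Finset V, IsKClub G k ↑S ∧ S.card = n}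

/-- First encoding with `k = 3`: for distinct non-adjacent nodes `i, j` both
set to true, and auxiliary variables `y r₁ r₂` constrained (via the defining
clauses) to equal `x_{r₁} ∧ x_{r₂}`, the clause `C_{ij}` is satisfied iff the
set `S` of true nodes contains an `i`–`j` path of length at most `3` in `G[S]`. -/
theorem stmt_15 {V : Type*} (G : SimpleGraph V) (t : V → Bool) (y : V → V → Bool)
    (hy : ∀ r₁ r₂ : V, y r₁ r₂ = true ↔ t r₁ = true ∧ t r₂ = true)
    (i j : V) (hij : i ≠ j) (hadj : ¬ G.Adj i j)
    (hi : t i = true) (hj : t j = true) :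
    (t i = false ∨ t j = false ∨
        (∃ r : V, G.Adj i r ∧ G.Adj r j ∧ t r = true) ∨
        (∃ r₁ r₂ : V, r₁ ≠ r₂ ∧ r₁ ≠ i ∧ r₁ ≠ j ∧ r₂ ≠ i ∧ r₂ ≠ j ∧
          G.Adj i r₁ ∧ G.Adj r₁ r₂ ∧ G.Adj r₂ j ∧ y r₁ r₂ = true)) ↔
      ∃ w : G.Walk i j, w.length ≤ 3 ∧ ∀ v ∈ w.support, t v = true := by
  constructor
  · rintro (h | h | ⟨r, hir, hrj, hr⟩ | ⟨r₁, r₂, _, _, _, _, _, h1, h2, h3, hyr⟩)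
    · simp [hi] at h
    · simp [hj] at h
    · refine ⟨.cons hir (.cons hrj .nil), by simp, ?_⟩
      intro v hv
      simp only [SimpleGraph.Walk.support_cons, SimpleGraph.Walk.support_nil,
        List.mem_cons, List.mem_singleton] at hv
      rcases hv with rfl | rfl | rfl | h; exacts [hi, hr, hj, absurd h (by simp)]
    · obtain ⟨ht1, ht2⟩ := (hy r₁ r₂).mp hyr
      refine ⟨.cons h1 (.cons h2 (.cons h3 .nil)), by simp, ?_⟩
      intro v hv
      simp only [SimpleGraph.Walk.support_cons, SimpleGraph.Walk.support_nil,
        List.mem_cons, List.mem_singleton] at hv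
      rcases hv with rfl | rfl | rfl | rfl | h
      exacts [hi, ht1, ht2, hj, absurd h (by simp)]
  · rintro ⟨w, hlen, hsupp⟩
    cases w with
    | nil => exact absurd rfl hij
    | cons h1 p =>
      cases p with
      | nil => exact absurd h1 hadj
      | cons h2 q =>
        cases q with
        | nil =>
          exact Or.inr (Or.inr (Or.inl ⟨_, h1, h2, hsupp _ (by simp)⟩))
        | cons h3 r =>
          cases r with
          | nil =>
            rename_i r₁ r₂
            refine Or.inr (Or.inr (Or.inr ⟨r₁, r₂, h2.ne, h1.ne', ?_, ?_, h3.ne,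
              h1, h2, h3, (hy r₁ r₂).mpr ⟨hsupp _ (by simp), hsupp _ (by simp)⟩⟩))
            · rintro rfl; exact hadj h1
            · rintro rfl; exact hadj h3
          | cons h4 s => simp at hlen; omega
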